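/- Flett's mean value theorem: Let a < b and let f : ℝ → ℝ be differentiable at every point of the closed interval [a, b], with f'(a) = f'(b). Then there exists ξ ∈ (a, b) such that f'(ξ) = (f(ξ) - f(a)) / (ξ - a). -/

import Mathlib

open Set Filter Topology

/-- Flett's mean value theorem. -/
theorem flett_mean_value (f f' : ℝ → ℝ) (a b : ℝ) (hab : a < b)
    (hf : ∀ x ∈ Set.Icc a b, HasDerivWithinAt f (f' x) (Set.Icc a b) x)
    (hend : f' a = f' b) :
    ∃ ξ ∈ Set.Ioo a b, f' ξ = (f ξ - f a) / (ξ - a) := by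
  classical
  set g : ℝ → ℝ := fun x => if x = a then f' a else (f x - f a) / (x - a) with hgdef
  have hga : g a = f' a := by simp [hgdef]
  have hgne : ∀ x, x ≠ a → g x = (f x - f a) / (x - a) := by
    intro x hx; simp [hgdef, hx]
  have hfc : ContinuousOn f (Icc a b) := fun x hx => (hf x hx).continuousWithinAt
  -- continuity of g on [a, b]
  have hcont : ContinuousOn g (Icc a b) := by
    intro x hx
    rcases eq_or_ne x a with rfl | hxa
    · rw [← continuousWithinAt_diff_singleton]
      have hsl := hasDerivWithinAt_iff_tendsto_slope.mp (hf x hx)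
      rw [ContinuousWithinAt, hga]
      refine hsl.congr' ?_
      filter_upwards [self_mem_nhdsWithin] with y hy
      rw [slope_def_field, hgne y hy.2]
    · have hx0 : x - a ≠ 0 := sub_ne_zero.mpr hxa
      have h1 : ContinuousWithinAt (fun y => (f y - f a) / (y - a)) (Icc a b) x :=
        ((hfc x hx).sub continuousWithinAt_const).div
          (continuousWithinAt_id.sub continuousWithinAt_const) hx0
      refine h1.congr_of_eventuallyEq ?_ (hgne x hxa)
      filter_upwards [mem_nhdsWithin_of_mem_nhds
        (isOpen_compl_singleton.mem_nhds (by simpa using hxa))] with y hy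
      exact hgne y hy
  -- derivative of g on (a, b]
  have hderiv : ∀ x ∈ Ioc a b, HasDerivWithinAt g ((f' x - g x) / (x - a)) (Icc a b) x := by
    intro x hx
    have hxa : a < x := hx.1
    have hx0 : x - a ≠ 0 := sub_ne_zero.mpr hxa.ne'
    have hmem : x ∈ Icc a b := ⟨hxa.le, hx.2⟩
    have h1 : HasDerivWithinAt (fun y => (f y - f a) / (y - a))
        ((f' x * (x - a) - (f x - f a) * 1) / (x - a) ^ 2) (Icc a b) x :=
      ((hf x hmem).sub_const (f a)).div ((hasDerivWithinAt_id x _).sub_const a) hx0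
    have heq : (f' x * (x - a) - (f x - f a) * 1) / (x - a) ^ 2 = (f' x - g x) / (x - a) := by
      rw [hgne x hxa.ne', div_eq_div_iff (pow_ne_zero 2 hx0) hx0]
      field_simp
    have h2 : HasDerivWithinAt g
        ((f' x * (x - a) - (f x - f a) * 1) / (x - a) ^ 2) (Icc a b) x := by
      refine h1.congr_of_eventuallyEq ?_ (hgne x hxa.ne')
      filter_upwards [mem_nhdsWithin_of_mem_nhds
        (isOpen_compl_singleton.mem_nhds (by simpa using hxa.ne'))] with y hy
      exact hgne y hy
    exact heq ▸ h2
  have hAt : ∀ x ∈ Ioo a b, HasDerivAt g ((f' x - g x) / (x - a)) x := fun x hx =>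
    (hderiv x ⟨hx.1, hx.2.le⟩).hasDerivAt (Icc_mem_nhds hx.1 hx.2)
  -- how to conclude from a critical point of g
  have key : ∀ ξ ∈ Ioo a b, (f' ξ - g ξ) / (ξ - a) = 0 →
      f' ξ = (f ξ - f a) / (ξ - a) := by
    intro ξ hξ h0
    have hx0 : ξ - a ≠ 0 := sub_ne_zero.mpr hξ.1.ne'
    have h1 : f' ξ - g ξ = 0 := by
      rcases div_eq_zero_iff.mp h0 with h | h
      · exact h
      · exact absurd h hx0
    have hfg : f' ξ = g ξ := by linarith
    rw [hfg, hgne ξ hξ.1.ne']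
  -- second Rolle step, shared by both strict cases
  have rolle2 : ∀ c, a < c → c < b → g c = g b →
      ∃ ξ ∈ Set.Ioo a b, f' ξ = (f ξ - f a) / (ξ - a) := by
    intro c hac hcb hgcb
    obtain ⟨ξ, hξ, h0⟩ := exists_hasDerivAt_eq_zero hcb
      (hcont.mono (Icc_subset_Icc hac.le le_rfl)) hgcb
      (fun x hx => hAt x ⟨hac.trans hx.1, hx.2⟩)
    have hξ' : ξ ∈ Ioo a b := ⟨hac.trans hξ.1, hξ.2⟩
    exact ⟨ξ, hξ', key ξ hξ' h0⟩
  have hfb : f' b = g a := by rw [hga, hend]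
  have hb0 : (0:ℝ) < b - a := sub_pos.mpr hab
  -- slope of g at b
  have hsl : Tendsto (slope g b) (𝓝[Icc a b \ {b}] b) (𝓝 ((f' b - g b) / (b - a))) :=
    hasDerivWithinAt_iff_tendsto_slope.mp (hderiv b ⟨hab, le_rfl⟩)
  haveI hNB : (𝓝[Icc a b \ {b}] b).NeBot := by
    refine (right_nhdsWithin_Ico_neBot hab).mono (nhdsWithin_mono _ ?_)
    intro y hy
    exact ⟨⟨hy.1, hy.2.le⟩, hy.2.ne⟩
  rcases lt_trichotomy (g b) (g a) with hlt | heq | hgt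
  · -- g b < g a : derivative of g at b is positive, find y < b with g y < g b
    have hdb : 0 < (f' b - g b) / (b - a) := by
      rw [hfb]; exact div_pos (by linarith) hb0
    obtain ⟨y, hy1, hy2⟩ := ((hsl.eventually (Ioi_mem_nhds hdb)).and
      self_mem_nhdsWithin).exists
    have hyb : y < b := lt_of_le_of_ne hy2.1.2 hy2.2
    have hgy : g y < g b := by
      rw [slope_def_field] at hy1
      have hyb0 : y - b < 0 := sub_neg.mpr hyb
      rcases div_pos_iff.mp hy1 with ⟨h1, h2⟩ | ⟨h1, h2⟩
      · linarith
      · linarith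
    -- IVT on [a, y]
    have hay : a ≤ y := hy2.1.1
    have hsub : Icc a y ⊆ Icc a b := Icc_subset_Icc le_rfl hy2.1.2
    have := intermediate_value_Icc' hay (hcont.mono hsub)
    obtain ⟨c, hc, hgc⟩ := this ⟨hgy.le, hlt.le⟩
    have hac : a < c := lt_of_le_of_ne hc.1 (by rintro rfl; exact hlt.ne' hgc)
    exact rolle2 c hac (lt_of_le_of_lt hc.2 hyb) hgc
  · obtain ⟨ξ, hξ, h0⟩ := exists_hasDerivAt_eq_zero hab hcont heq.symm hAt
    exact ⟨ξ, hξ, key ξ hξ h0⟩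
  · -- g b > g a : derivative of g at b is negative, find y < b with g y > g b
    have hdb : (f' b - g b) / (b - a) < 0 := by
      rw [hfb]
      exact div_neg_of_neg_of_pos (by linarith) hb0
    obtain ⟨y, hy1, hy2⟩ := ((hsl.eventually (Iio_mem_nhds hdb)).and
      self_mem_nhdsWithin).exists
    have hyb : y < b := lt_of_le_of_ne hy2.1.2 hy2.2
    have hgy : g b < g y := by
      rw [slope_def_field] at hy1
      have hyb0 : y - b < 0 := sub_neg.mpr hyb
      rcases div_neg_iff.mp hy1 with ⟨h1, h2⟩ | ⟨h1, h2⟩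
      · linarith
      · linarith
    have hay : a ≤ y := hy2.1.1
    have hsub : Icc a y ⊆ Icc a b := Icc_subset_Icc le_rfl hy2.1.2
    have := intermediate_value_Icc hay (hcont.mono hsub)
    obtain ⟨c, hc, hgc⟩ := this ⟨hgt.le, hgy.le⟩
    have hac : a < c := lt_of_le_of_ne hc.1 (by rintro rfl; exact hgt.ne hgc)
    exact rolle2 c hac (lt_of_le_of_lt hc.2 hyb) hgc
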